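/- Let A_1, ..., A_n be canonical events in the uniform probability space Ω = I(U,V) of injections from a finite set U to a finite set V with |U| ≤ |V|, say A_i = A_{S_i, T_i, f_i} for matchings (S_i, T_i, f_i). Let G be the graph on [n] whose edges are exactly the pairs {i,j} such that the matchings (S_i, T_i, f_i) and (S_j, T_j, f_j) conflict. Then G is a negative dependency graph for A_1, ..., A_n. -/
import Mathlib


/-- A matching between `U` and `V`: a pair of subsets `S ⊆ U`, `T ⊆ V` together with a
bijection `f : S → T`. -/
structure Matching (U V : Type*) where
  S : Set U
  T : Set V
  f : S ≃ T

/-- The canonical event associated to a matching `(S, T, f)`: the set of injections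
`σ : U → V` extending `f`. -/
def canonicalEvent {U V : Type*} (M : Matching U V) :
    Set {σ : U → V // Function.Injective σ} :=
  {σ | ∀ k : M.S, σ.1 k = M.f k}

/-- Two matchings conflict if they disagree at some common point of their domains, or
their inverses disagree at some common point of their ranges. -/
def Matching.Conflict {U V : Type*} (M₁ M₂ : Matching U V) : Prop :=
  (∃ (k : U) (h₁ : k ∈ M₁.S) (h₂ : k ∈ M₂.S), (M₁.f ⟨k, h₁⟩ : V) ≠ (M₂.f ⟨k, h₂⟩ : V)) ∨
  (∃ (k : V) (h₁ : k ∈ M₁.T) (h₂ : k ∈ M₂.T),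
    (M₁.f.symm ⟨k, h₁⟩ : U) ≠ (M₂.f.symm ⟨k, h₂⟩ : U))

/-- The probability of an event `E` under the uniform probability measure on `Ω`. -/
noncomputable def unifProb {Ω : Type*} (E : Set Ω) : ℝ :=
  (Nat.card E : ℝ) / (Nat.card Ω : ℝ)

namespace NDG

open Function Set

universe u₁ u₂ w

variable {U : Type u₁} {V : Type u₂}

/-- Generic cardinality transfer along an equivalence of a fiber. -/
lemma card_transfer {α : Type*} {β : Type*} (p : α → Prop)
    (e : {x // p x} ≃ β) (s : Set α) (t : Set β)
    (hs : ∀ x ∈ s, p x)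
    (h : ∀ (x : α) (hx : p x), x ∈ s ↔ e ⟨x, hx⟩ ∈ t) :
    Nat.card s = Nat.card t := by
  refine Nat.card_congr
    ⟨fun x => ⟨e ⟨x.1, hs x.1 x.2⟩, (h x.1 (hs x.1 x.2)).1 x.2⟩,
     fun y => ⟨(e.symm y.1).1, (h _ (e.symm y.1).2).2 (by
       simp only [Subtype.coe_eta, Equiv.apply_symm_apply]; exact y.2)⟩,
     fun x => Subtype.ext (by simp), fun y => Subtype.ext (by simp)⟩

section Reduce

variable [DecidableEq U]

def upFun (u : U) (v : V) (τ : {x : U // x ≠ u} → {y : V // y ≠ v}) : U → V :=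
  fun x => if h : x = u then v else (τ ⟨x, h⟩).1

lemma upFun_injective (u : U) (v : V) (τ : {x : U // x ≠ u} → {y : V // y ≠ v})
    (hτ : Injective τ) : Injective (upFun u v τ) := by
  intro a b hab
  unfold upFun at hab
  split_ifs at hab with h1 h2 h2
  · rw [h1, h2]
  · exact absurd hab.symm (τ ⟨b, h2⟩).2
  · exact absurd hab (τ ⟨a, h1⟩).2
  · have : (⟨a, h1⟩ : {x : U // x ≠ u}) = ⟨b, h2⟩ := hτ (Subtype.ext hab)
    exact congrArg Subtype.val this

/-- The equivalence between injections `U → V` sending `u` to `v` and injections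
`U \ {u} → V \ {v}`. -/
def Phi (u : U) (v : V) :
    {σ : {σ : U → V // Injective σ} // σ.1 u = v} ≃
    {τ : {x : U // x ≠ u} → {y : V // y ≠ v} // Injective τ} where
  toFun σ := ⟨fun x => ⟨σ.1.1 x.1, fun h => x.2 (σ.1.2 (h.trans σ.2.symm))⟩,
    fun a b hab => Subtype.ext (σ.1.2 (congrArg Subtype.val hab))⟩
  invFun τ := ⟨⟨upFun u v τ.1, upFun_injective u v τ.1 τ.2⟩, by simp [upFun]⟩
  left_inv σ := by
    apply Subtype.ext; apply Subtype.ext; funext x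
    simp only [upFun]
    split_ifs with h
    · rw [h, σ.2]
    · rfl
  right_inv τ := by
    apply Subtype.ext; funext x
    apply Subtype.ext
    simp only [upFun, dif_neg x.2]

/-- Reduction of a matching that does not cross the pair `(u, v)` to a matching between
`U \ {u}` and `V \ {v}`. -/
def _root_.Matching.reduce (N : Matching U V) (u : U) (v : V)
    (h1 : ∀ (x : U) (h : x ∈ N.S), x ≠ u → ((N.f ⟨x, h⟩ : V) ≠ v))
    (h2 : ∀ (y : V) (h : y ∈ N.T), y ≠ v → ((N.f.symm ⟨y, h⟩ : U) ≠ u)) :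
    Matching {x : U // x ≠ u} {y : V // y ≠ v} where
  S := {x | x.1 ∈ N.S}
  T := {y | y.1 ∈ N.T}
  f := {
    toFun := fun x => ⟨⟨(N.f ⟨x.1.1, x.2⟩ : V), h1 x.1.1 x.2 x.1.2⟩, (N.f ⟨x.1.1, x.2⟩).2⟩
    invFun := fun y => ⟨⟨(N.f.symm ⟨y.1.1, y.2⟩ : U), h2 y.1.1 y.2 y.1.2⟩,
      (N.f.symm ⟨y.1.1, y.2⟩).2⟩
    left_inv := fun x => by
      apply Subtype.ext; apply Subtype.ext
      simp
    right_inv := fun y => by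
      apply Subtype.ext; apply Subtype.ext
      simp }

lemma reduce_conflict {M N : Matching U V} {u : U} {v : V}
    {hm1 hm2 hn1 hn2}
    (h : (M.reduce u v hm1 hm2).Conflict (N.reduce u v hn1 hn2)) : M.Conflict N := by
  rcases h with ⟨k, h₁, h₂, hne⟩ | ⟨k, h₁, h₂, hne⟩
  · exact Or.inl ⟨k.1, h₁, h₂, fun hh => hne (Subtype.ext hh)⟩
  · exact Or.inr ⟨k.1, h₁, h₂, fun hh => hne (Subtype.ext hh)⟩

lemma mem_canonicalEvent_reduce (N : Matching U V) (u : U) (v : V)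
    {h1 h2}
    (hN : ∀ (h : u ∈ N.S), ((N.f ⟨u, h⟩ : V)) = v)
    (σ : {σ : U → V // Injective σ}) (hσ : σ.1 u = v) :
    σ ∈ canonicalEvent N ↔ (Phi u v ⟨σ, hσ⟩ : _) ∈ canonicalEvent (N.reduce u v h1 h2) := by
  constructor
  · intro H k
    exact Subtype.ext (H ⟨k.1.1, k.2⟩)
  · intro H k
    by_cases hk : (k : U) = u
    · have huS : u ∈ N.S := hk ▸ k.2
      have hkeq : k = ⟨u, huS⟩ := Subtype.ext hk
      rw [hkeq, hN huS]
      exact hσ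
    · exact congrArg Subtype.val (H ⟨⟨k.1, hk⟩, k.2⟩)

end Reduce

section Swap

variable [Finite U] [Finite V] [DecidableEq V]

/-- `|Ω| = |fiber| * |V|` via the swap bijection. -/
lemma card_inj_eq (u : U) (v : V) :
    Nat.card {σ : U → V // Injective σ} =
      Nat.card {σ : {σ : U → V // Injective σ} // σ.1 u = v} * Nat.card V := by
  rw [← Nat.card_prod]
  apply Nat.card_congr
  refine ⟨fun σ => (⟨⟨(Equiv.swap v (σ.1 u)) ∘ σ.1,
      (Equiv.swap v (σ.1 u)).injective.comp σ.2⟩, by simp⟩, σ.1 u),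
    fun p => ⟨(Equiv.swap v p.2) ∘ p.1.1.1, (Equiv.swap v p.2).injective.comp p.1.1.2⟩,
    fun σ => ?_, fun p => ?_⟩
  · apply Subtype.ext; funext x; simp
  · obtain ⟨⟨⟨τ, hτ⟩, hτu⟩, w⟩ := p
    have hτu' : τ u = v := hτu
    have hw : (Equiv.swap v w ∘ τ) u = w := by
      simp only [comp_apply]; rw [hτu', Equiv.swap_apply_left]
    refine Prod.ext (Subtype.ext (Subtype.ext (funext fun x => ?_))) hw
    have hw' : (Equiv.swap v w) (τ u) = w := hw
    show (Equiv.swap v ((Equiv.swap v w ∘ τ) u)) ((Equiv.swap v w) (τ x)) = τ x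
    simp only [comp_apply, hw', Equiv.swap_apply_self]

/-- The swap argument: a single-pair event is negatively correlated with the
intersection of complements of non-conflicting canonical events. -/
lemma swap_bound {ι : Type w} (u : U) (v : V) (N : ι → Matching U V)
    (ha : ∀ j (h : u ∈ (N j).S), (((N j).f ⟨u, h⟩ : V)) = v)
    (hb : ∀ j (h : v ∈ (N j).T), (((N j).f.symm ⟨v, h⟩ : U)) = u) :
    Nat.card ({σ : {σ : U → V // Injective σ} | σ.1 u = v} ∩
        ⋂ j, (canonicalEvent (N j))ᶜ : Set _) * Nat.card V ≤
      Nat.card (⋂ j, (canonicalEvent (N j))ᶜ : Set {σ : U → V // Injective σ}) := by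
  classical
  set Ω := {σ : U → V // Injective σ}
  set B : Set Ω := ⋂ j, (canonicalEvent (N j))ᶜ with hB
  have key : ∀ (σ : Ω), σ.1 u = v → σ ∈ B → ∀ w : V,
      (⟨Equiv.swap v w ∘ σ.1, (Equiv.swap v w).injective.comp σ.2⟩ : Ω) ∈ B := by
    intro σ hσu hσB w
    rw [hB, Set.mem_iInter] at hσB ⊢
    intro j
    simp only [Set.mem_compl_iff] at hσB ⊢
    intro hmem
    apply hσB j
    intro k
    have h1 : Equiv.swap v w (σ.1 k.1) = ((N j).f k : V) := hmem k
    by_cases hw : w = v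
    · subst hw; simpa using h1
    by_cases h2 : σ.1 k.1 = v
    · have hk : (k : U) = u := σ.2 (h2.trans hσu.symm)
      have huS : u ∈ (N j).S := by rw [← hk]; exact k.2
      have hkeq : k = ⟨u, huS⟩ := Subtype.ext hk
      rw [hkeq, ha j huS]
      rw [hkeq] at h2; exact h2
    by_cases h3 : σ.1 k.1 = w
    · rw [h3, Equiv.swap_apply_right] at h1
      have hvT : v ∈ (N j).T := h1 ▸ ((N j).f k).2
      have hfk : (N j).f k = ⟨v, hvT⟩ := Subtype.ext h1.symm
      have hku : (k : U) = u := by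
        have hs := hb j hvT
        rw [← hfk, Equiv.symm_apply_apply] at hs
        exact hs
      exact absurd (by rw [hku, hσu]) h2
    · rw [Equiv.swap_apply_of_ne_of_ne h2 h3] at h1
      exact h1
  have hmem : ∀ p : (↥({σ : Ω | σ.1 u = v} ∩ B)) × V,
      (⟨Equiv.swap v p.2 ∘ p.1.1.1, (Equiv.swap v p.2).injective.comp p.1.1.2⟩ : Ω) ∈ B :=
    fun p => key p.1.1 p.1.2.1 p.1.2.2 p.2
  have hinj : Injective (fun p : (↥({σ : Ω | σ.1 u = v} ∩ B)) × V =>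
      (⟨⟨Equiv.swap v p.2 ∘ p.1.1.1, (Equiv.swap v p.2).injective.comp p.1.1.2⟩,
        hmem p⟩ : ↥B)) := by
    intro p q hpq
    have hval : Equiv.swap v p.2 ∘ p.1.1.1 = Equiv.swap v q.2 ∘ q.1.1.1 :=
      congrArg (fun r => r.1.1) hpq
    have hu1 : p.1.1.1 u = v := p.1.2.1
    have hu2 : q.1.1.1 u = v := q.1.2.1
    have hw : p.2 = q.2 := by
      have := congrFun hval u
      simp only [comp_apply, hu1, hu2, Equiv.swap_apply_left] at this
      exact this
    have hfun : p.1.1.1 = q.1.1.1 := by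
      funext x
      have := congrFun hval x
      rw [hw] at this
      exact (Equiv.swap v q.2).injective this
    exact Prod.ext (Subtype.ext (Subtype.ext hfun)) hw
  calc Nat.card (↥({σ : Ω | σ.1 u = v} ∩ B)) * Nat.card V
      = Nat.card ((↥({σ : Ω | σ.1 u = v} ∩ B)) × V) := (Nat.card_prod _ _).symm
    _ ≤ Nat.card B := Nat.card_le_card_of_injective _ hinj

end Swap

section Core

lemma core_empty {U : Type u₁} {V : Type u₂} [Finite U] [Finite V]
    {ι : Type w} (M : Matching U V) (N : ι → Matching U V) (hS : M.S = ∅) :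
    Nat.card ↥(canonicalEvent M ∩ ⋂ j, (canonicalEvent (N j))ᶜ) *
      Nat.card {σ : U → V // Injective σ} ≤
    Nat.card ↥(canonicalEvent M) * Nat.card ↥(⋂ j, (canonicalEvent (N j))ᶜ) := by
  have hA : canonicalEvent M = Set.univ := by
    ext σ
    simp only [canonicalEvent, Set.mem_setOf_eq, Set.mem_univ, iff_true]
    rintro ⟨k, hk⟩
    rw [hS] at hk
    exact hk.elim
  rw [hA, Set.univ_inter]
  rw [Nat.card_coe_set_eq Set.univ, Set.ncard_univ]
  exact le_of_eq (mul_comm _ _)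

lemma core {ι : Type w} : ∀ (n : ℕ) (U : Type u₁) (V : Type u₂), ∀ [Finite U] [Finite V],
    ∀ (M : Matching U V) (N : ι → Matching U V),
    (∀ j, ¬ M.Conflict (N j)) → Nat.card M.S ≤ n →
    Nat.card ↥(canonicalEvent M ∩ ⋂ j, (canonicalEvent (N j))ᶜ) *
      Nat.card {σ : U → V // Injective σ} ≤
    Nat.card ↥(canonicalEvent M) * Nat.card ↥(⋂ j, (canonicalEvent (N j))ᶜ) := by
  intro n
  induction n with
  | zero =>
    intro U V _ _ M N hconf hn
    refine core_empty M N ?_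
    rw [← Set.isEmpty_coe_sort]
    rcases Nat.card_eq_zero.1 (Nat.le_zero.1 hn) with h | h
    · exact h
    · exact absurd h (not_infinite_iff_finite.2 inferInstance)
  | succ n IH =>
    intro U V _ _ M N hconf hn
    classical
    rcases Set.eq_empty_or_nonempty M.S with hS | ⟨u, hu⟩
    · exact core_empty M N hS
    set Ω := {σ : U → V // Injective σ}
    set v : V := (M.f ⟨u, hu⟩ : V) with hv_def
    have hv : v ∈ M.T := (M.f ⟨u, hu⟩).2
    have hfuv : M.f ⟨u, hu⟩ = ⟨v, hv⟩ := Subtype.ext rfl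
    -- consequences of non-conflict
    have ha : ∀ j (h : u ∈ (N j).S), ((N j).f ⟨u, h⟩ : V) = v := by
      intro j h
      by_contra hne
      exact hconf j (Or.inl ⟨u, hu, h, fun hh => hne hh.symm⟩)
    have hb : ∀ j (h : v ∈ (N j).T), ((N j).f.symm ⟨v, h⟩ : U) = u := by
      intro j h
      by_contra hne
      refine hconf j (Or.inr ⟨v, hv, h, ?_⟩)
      have h2 : M.f.symm ⟨v, hv⟩ = ⟨u, hu⟩ := by rw [← hfuv, Equiv.symm_apply_apply]
      rw [h2]
      exact fun hh => hne hh.symm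
    have hc : ∀ j (x : U) (h : x ∈ (N j).S), x ≠ u → ((N j).f ⟨x, h⟩ : V) ≠ v := by
      intro j x h hxu hfv
      have hvT : v ∈ (N j).T := hfv ▸ ((N j).f ⟨x, h⟩).2
      have h1 : (N j).f ⟨x, h⟩ = ⟨v, hvT⟩ := Subtype.ext hfv
      have h2 := hb j hvT
      rw [← h1, Equiv.symm_apply_apply] at h2
      exact hxu h2
    have hd : ∀ j (y : V) (h : y ∈ (N j).T), y ≠ v → ((N j).f.symm ⟨y, h⟩ : U) ≠ u := by
      intro j y h hyv hfu
      have huS : u ∈ (N j).S := hfu ▸ ((N j).f.symm ⟨y, h⟩).2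
      have h1 : (N j).f.symm ⟨y, h⟩ = ⟨u, huS⟩ := Subtype.ext hfu
      have h2 := ha j huS
      rw [← h1, Equiv.apply_symm_apply] at h2
      exact hyv h2
    have hcM : ∀ (x : U) (h : x ∈ M.S), x ≠ u → ((M.f ⟨x, h⟩ : V) ≠ v) := by
      intro x h hxu hfv
      apply hxu
      have heq : M.f ⟨x, h⟩ = M.f ⟨u, hu⟩ := Subtype.ext hfv
      exact congrArg Subtype.val (M.f.injective heq)
    have hdM : ∀ (y : V) (h : y ∈ M.T), y ≠ v → ((M.f.symm ⟨y, h⟩ : U) ≠ u) := by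
      intro y h hyv hfu
      apply hyv
      have h2 : M.f.symm ⟨y, h⟩ = ⟨u, hu⟩ := Subtype.ext hfu
      have h3 := congrArg (fun z => (M.f z : V)) h2
      simp only [Equiv.apply_symm_apply] at h3
      exact h3
    set M' := M.reduce u v hcM hdM with hM'
    set N' : ι → Matching {x : U // x ≠ u} {y : V // y ≠ v} :=
      fun j => (N j).reduce u v (hc j) (hd j) with hN'
    have hconf' : ∀ j, ¬ M'.Conflict (N' j) := fun j h => hconf j (reduce_conflict h)
    -- cardinality of the reduced matching domain
    have hn' : Nat.card M'.S ≤ n := by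
      have e : ↥M'.S ≃ ↥(M.S \ {u} : Set U) :=
        ⟨fun x => ⟨x.1.1, x.2, x.1.2⟩, fun x => ⟨⟨x.1, x.2.2⟩, x.2.1⟩,
         fun x => rfl, fun x => rfl⟩
      rw [Nat.card_congr e, Nat.card_coe_set_eq]
      have hlt : (M.S \ {u}).ncard < M.S.ncard :=
        Set.ncard_diff_singleton_lt_of_mem hu (Set.toFinite _)
      have hcard : M.S.ncard ≤ n + 1 := by
        rw [← Nat.card_coe_set_eq]; exact hn
      omega
    -- membership transfer lemmas
    have hNM : ∀ (h : u ∈ M.S), ((M.f ⟨u, h⟩ : V)) = v := fun h => rfl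
    have hmemM : ∀ (σ : Ω) (hσ : σ.1 u = v),
        σ ∈ canonicalEvent M ↔
          (Phi u v ⟨σ, hσ⟩ : _) ∈ canonicalEvent M' :=
      fun σ hσ => mem_canonicalEvent_reduce M u v hNM σ hσ
    have hmemN : ∀ j (σ : Ω) (hσ : σ.1 u = v),
        σ ∈ canonicalEvent (N j) ↔
          (Phi u v ⟨σ, hσ⟩ : _) ∈ canonicalEvent (N' j) :=
      fun j σ hσ => mem_canonicalEvent_reduce (N j) u v (ha j) σ hσ
    have hfibM : ∀ σ ∈ canonicalEvent M, σ.1 u = v := fun σ hσ => hσ ⟨u, hu⟩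
    set B : Set Ω := ⋂ j, (canonicalEvent (N j))ᶜ with hB
    set B' : Set {τ : {x : U // x ≠ u} → {y : V // y ≠ v} // Injective τ} :=
      ⋂ j, (canonicalEvent (N' j))ᶜ with hB'
    have hmemB : ∀ (σ : Ω) (hσ : σ.1 u = v),
        σ ∈ B ↔ (Phi u v ⟨σ, hσ⟩ : _) ∈ B' := by
      intro σ hσ
      rw [hB, hB']
      simp only [Set.mem_iInter, Set.mem_compl_iff]
      exact forall_congr' fun j => not_congr (hmemN j σ hσ)
    have T2 : Nat.card ↥(canonicalEvent M) = Nat.card ↥(canonicalEvent M') :=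
      card_transfer _ (Phi u v) _ _ hfibM hmemM
    have T1 : Nat.card ↥(canonicalEvent M ∩ B) =
        Nat.card ↥(canonicalEvent M' ∩ B') := by
      refine card_transfer _ (Phi u v) _ _ (fun σ hσ => hfibM σ hσ.1) ?_
      intro σ hσ
      simp only [Set.mem_inter_iff]
      exact and_congr (hmemM σ hσ) (hmemB σ hσ)
    have T3 : Nat.card ↥({σ : Ω | σ.1 u = v} ∩ B) = Nat.card ↥B' := by
      refine card_transfer _ (Phi u v) _ _ (fun σ hσ => hσ.1) ?_
      intro σ hσ
      simp only [Set.mem_inter_iff, Set.mem_setOf_eq]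
      rw [← hmemB σ hσ]
      exact and_iff_right hσ
    have T4 : Nat.card Ω =
        Nat.card {τ : {x : U // x ≠ u} → {y : V // y ≠ v} // Injective τ} * Nat.card V := by
      rw [card_inj_eq u v, Nat.card_congr (Phi u v)]
    have hIH := IH {x : U // x ≠ u} {y : V // y ≠ v} M' N' hconf' hn'
    have hSW := swap_bound u v N ha hb
    calc Nat.card ↥(canonicalEvent M ∩ B) * Nat.card Ω
        = Nat.card ↥(canonicalEvent M' ∩ B') *
            (Nat.card {τ : {x : U // x ≠ u} → {y : V // y ≠ v} // Injective τ} *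
              Nat.card V) := by rw [T1, T4]
      _ = (Nat.card ↥(canonicalEvent M' ∩ B') *
            Nat.card {τ : {x : U // x ≠ u} → {y : V // y ≠ v} // Injective τ}) *
              Nat.card V := by ring
      _ ≤ (Nat.card ↥(canonicalEvent M') * Nat.card ↥B') * Nat.card V :=
            Nat.mul_le_mul_right _ hIH
      _ = Nat.card ↥(canonicalEvent M) *
            (Nat.card ↥({σ : Ω | σ.1 u = v} ∩ B) * Nat.card V) := by
            rw [T2, T3]; ring
      _ ≤ Nat.card ↥(canonicalEvent M) * Nat.card ↥B :=
            Nat.mul_le_mul_left _ hSW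

end Core

end NDG

/-- In the uniform probability space of injections from a finite set `U` to a finite set
`V` with `|U| ≤ |V|`, the graph on `[n]` whose edges are exactly the pairs `{i, j}` whose
associated matchings conflict is a negative dependency graph for the canonical events
`A i = A_{S i, T i, f i}`. -/
theorem negativeDependencyGraph_of_conflict {U V : Type*} [Fintype U] [Fintype V]
    (hUV : Fintype.card U ≤ Fintype.card V)
    {n : ℕ} (M : Fin n → Matching U V)
    (A : Fin n → Set {σ : U → V // Function.Injective σ})
    (hA : ∀ i, A i = canonicalEvent (M i))
    (G : SimpleGraph (Fin n))
    (hG : ∀ i j, G.Adj i j ↔ (M i).Conflict (M j)) :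
    ∀ (i : Fin n) (S : Finset (Fin n)), i ∉ S → (∀ j ∈ S, ¬ G.Adj i j) →
      0 < unifProb (⋂ j ∈ S, (A j)ᶜ) →
      unifProb (A i ∩ ⋂ j ∈ S, (A j)ᶜ) / unifProb (⋂ j ∈ S, (A j)ᶜ)
        ≤ unifProb (A i) := by
  intro i S hiS hadj hpos
  classical
  have hBeq : (⋂ j ∈ S, (A j)ᶜ) = ⋂ j : ↥S, (canonicalEvent (M j.1))ᶜ := by
    ext σ
    simp only [Set.mem_iInter, Set.mem_compl_iff, Subtype.forall, hA]
  rw [hBeq] at hpos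
  rw [hA i, hBeq]
  have hconf : ∀ j : ↥S, ¬ (M i).Conflict (M j.1) :=
    fun j hc => hadj j.1 j.2 ((hG i j.1).2 hc)
  have key := NDG.core (ι := ↥S) (Nat.card (M i).S) U V (M i) (fun j => M j.1) hconf le_rfl
  simp only [unifProb] at hpos ⊢
  set a := Nat.card ↥(canonicalEvent (M i) ∩ ⋂ j : ↥S, (canonicalEvent (M j.1))ᶜ) with ha
  set b := Nat.card ↥(⋂ j : ↥S, (canonicalEvent (M j.1))ᶜ) with hb
  set c := Nat.card ↥(canonicalEvent (M i)) with hc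
  set m := Nat.card {σ : U → V // Function.Injective σ} with hm
  have hmpos : 0 < m := by
    rcases Nat.eq_zero_or_pos m with h | h
    · rw [h] at hpos; simp at hpos
    · exact h
  have hmR : (0 : ℝ) < m := by exact_mod_cast hmpos
  have hbpos : 0 < b := by
    rcases Nat.eq_zero_or_pos b with h | h
    · rw [h] at hpos; simp at hpos
    · exact h
  have hbR : (0 : ℝ) < b := by exact_mod_cast hbpos
  have hsimp : ((a : ℝ) / m) / ((b : ℝ) / m) = (a : ℝ) / b := by
    field_simp
  rw [hsimp, div_le_div_iff₀ hbR hmR]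
  exact_mod_cast key
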